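/- Suppose f and M are real-valued functions on ℝ^ℕ satisfying the Lipschitz conditions |f(x) − f(y)| ≤ Σ_j a_j |x_j − y_j| and |M(x) − M(y)| ≤ Σ_j m_j |x_j − y_j| with Σ_j a_j + κ·Σ_j m_j < 1, where κ = (E|ζ₀|^r)^{1/r} for an i.i.d. sequence (ζ_t) with E|ζ₀|^r < ∞, r ≥ 1. If X is the stationary causal solution of X_t = M(X_{t-1}, X_{t-2}, …)·ζ_t + f(X_{t-1}, X_{t-2}, …), then E[|X₀|^r] ≤ ((|f(0)| + κ|M(0)|) / (1 − Σ_j a_j − κ Σ_j m_j))^r, assuming f(0), M(0) denote the values at the zero sequence. -/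

import Mathlib

open MeasureTheory ProbabilityTheory Filter Topology ENNReal

namespace AffineCausalAux


/-- A function on `ℝ^ℕ` satisfying a weighted-ℓ¹ Lipschitz condition is measurable. -/
lemma measurable_of_lip (f : (ℕ → ℝ) → ℝ) (a : ℕ → ℝ) (ha : ∀ j, 0 ≤ a j)
    (hf : ∀ x y, |f x - f y| ≤ ∑' j, a j * |x j - y j|) : Measurable f := by
  set T : ℕ → (ℕ → ℝ) → (ℕ → ℝ) := fun n x j => if j < n then x j else 0 with hT
  have hmeas : ∀ n, Measurable fun x => f (T n x) := by
    intro n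
    have hfac : (fun x : ℕ → ℝ => f (T n x))
        = (fun v : Fin n → ℝ => f (fun j => if h : j < n then v ⟨j, h⟩ else 0))
            ∘ (fun x (i : Fin n) => x i) := by
      funext x
      show f (T n x) = f (fun j => if h : j < n then x j else 0)
      congr 1
    rw [hfac]
    have hcont : Continuous fun v : Fin n → ℝ =>
        f (fun j => if h : j < n then v ⟨j, h⟩ else 0) := by
      have hlip : LipschitzWith ⟨∑ j ∈ Finset.range n, a j,
          Finset.sum_nonneg fun j _ => ha j⟩
          (fun v : Fin n → ℝ => f (fun j => if h : j < n then v ⟨j, h⟩ else 0)) := by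
        apply LipschitzWith.of_dist_le_mul
        intro v w
        rw [Real.dist_eq]
        refine le_trans (hf _ _) ?_
        have hzero : ∀ j ∉ Finset.range n,
            a j * |(if h : j < n then v ⟨j, h⟩ else 0) - (if h : j < n then w ⟨j, h⟩ else 0)| = 0 := by
          intro j hj
          rw [Finset.mem_range] at hj
          simp [hj]
        rw [tsum_eq_sum hzero]
        show _ ≤ (∑ j ∈ Finset.range n, a j) * dist v w
        rw [Finset.sum_mul]
        refine Finset.sum_le_sum fun j hj => ?_
        rw [Finset.mem_range] at hj
        simp only [hj, dif_pos]
        have : |v ⟨j, hj⟩ - w ⟨j, hj⟩| ≤ dist v w := by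
          simpa [Real.dist_eq] using dist_le_pi_dist v w ⟨j, hj⟩
        exact mul_le_mul_of_nonneg_left this (ha j)
      exact hlip.continuous
    exact hcont.measurable.comp (measurable_pi_lambda _ fun i => measurable_pi_apply _)
  have htend : ∀ x, Tendsto (fun n => f (T n x)) atTop (𝓝 (f x)) := by
    intro x
    set g : ℕ → ℝ := fun j => a j * |x j| with hg
    have hg_nonneg : ∀ j, 0 ≤ g j := fun j => mul_nonneg (ha j) (abs_nonneg _)
    have hbound : ∀ n, |f (T n x) - f x| ≤ ∑' j, (if j < n then 0 else g j) := by
      intro n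
      refine le_trans (hf _ _) (le_of_eq ?_)
      congr 1
      funext j
      by_cases h : j < n <;> simp [hT, hg, h, abs_sub_comm]
    by_cases hsum : Summable g
    · have hsplit : ∀ n, ∑' j, (if j < n then 0 else g j)
          = (∑' j, g j) - ∑ j ∈ Finset.range n, g j := by
        intro n
        have h1 : Summable fun j => if j < n then 0 else g j :=
          hsum.of_nonneg_of_le (fun j => by by_cases h : j < n <;> simp [h, hg_nonneg j])
            (fun j => by by_cases h : j < n <;> simp [h, hg_nonneg j])
        have h3 : Summable fun j => if j < n then g j else 0 := by
          apply summable_of_ne_finset_zero (s := Finset.range n)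
          intro j hj
          rw [Finset.mem_range] at hj
          simp [hj]
        have h4 : (∑' j, (if j < n then g j else 0)) = ∑ j ∈ Finset.range n, g j := by
          rw [tsum_eq_sum (s := Finset.range n)
            (fun j hj => by rw [Finset.mem_range] at hj; simp [hj])]
          exact Finset.sum_congr rfl fun j hj => by rw [Finset.mem_range] at hj; simp [hj]
        have h2 : (∑' j, g j) = (∑' j, (if j < n then 0 else g j)) + ∑ j ∈ Finset.range n, g j := by
          rw [← h4, ← Summable.tsum_add h1 h3]
          congr 1
          funext j
          by_cases h : j < n <;> simp [h]
        rw [h2]; ring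
      have htail : Tendsto (fun n => ∑' j, (if j < n then 0 else g j)) atTop (𝓝 0) := by
        simp_rw [hsplit]
        have h0 : Tendsto (fun n => (∑' j, g j) - ∑ j ∈ Finset.range n, g j) atTop
            (𝓝 ((∑' j, g j) - ∑' j, g j)) := tendsto_const_nhds.sub hsum.hasSum.tendsto_sum_nat
        simpa using h0
      rw [tendsto_iff_dist_tendsto_zero]
      exact squeeze_zero (fun n => dist_nonneg)
        (fun n => (Real.dist_eq _ _).symm ▸ hbound n) htail
    · have hconst : ∀ n, f (T n x) = f x := by
        intro n
        have h1 : ¬ Summable fun j => if j < n then 0 else g j := by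
          intro h1
          apply hsum
          have h3 : Summable fun j => if j < n then g j else 0 := by
            apply summable_of_ne_finset_zero (s := Finset.range n)
            intro j hj
            rw [Finset.mem_range] at hj
            simp [hj]
          refine (h1.add h3).congr fun j => ?_
          by_cases h : j < n <;> simp [h]
        have h2 := hbound n
        rw [tsum_eq_zero_of_not_summable h1] at h2
        exact sub_eq_zero.mp (abs_eq_zero.mp (le_antisymm h2 (abs_nonneg _)))
      simp_rw [hconst]
      exact tendsto_const_nhds
  exact measurable_of_tendsto_metrizable hmeas (tendsto_pi_nhds.mpr htend)


variable {Ω : Type*} [MeasurableSpace Ω] {μ : Measure Ω}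


variable {Ω : Type*} [MeasurableSpace Ω] {μ : Measure Ω}

lemma lintegral_Lp_sum_le {r : ℝ} (hr : 1 ≤ r) (G : ℕ → Ω → ℝ≥0∞)
    (hG : ∀ j, Measurable (G j)) (n : ℕ) :
    (∫⁻ ω, (∑ j ∈ Finset.range n, G j ω) ^ r ∂μ) ^ (1/r)
      ≤ ∑ j ∈ Finset.range n, (∫⁻ ω, (G j ω) ^ r ∂μ) ^ (1/r) := by
  have hr0 : (0:ℝ) < r := lt_of_lt_of_le one_pos hr
  induction n with
  | zero =>
      simp [ENNReal.zero_rpow_of_pos hr0, ENNReal.zero_rpow_of_pos (by positivity : (0:ℝ) < 1/r), hr0]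
  | succ n ih =>
      have hS : Measurable fun ω => ∑ j ∈ Finset.range n, G j ω :=
        Finset.measurable_sum _ fun j _ => hG j
      have h := ENNReal.lintegral_Lp_add_le (μ := μ) hS.aemeasurable (hG n).aemeasurable hr
      simp only [Finset.sum_range_succ]
      exact le_trans h (add_le_add_left ih _)
lemma lintegral_Lp_tsum_le {r : ℝ} (hr : 1 ≤ r) (G : ℕ → Ω → ℝ≥0∞)
    (hG : ∀ j, Measurable (G j)) :
    (∫⁻ ω, (∑' j, G j ω) ^ r ∂μ) ^ (1/r) ≤ ∑' j, (∫⁻ ω, (G j ω) ^ r ∂μ) ^ (1/r) := by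
  have hr0 : (0:ℝ) < r := lt_of_lt_of_le one_pos hr
  set S : ℕ → Ω → ℝ≥0∞ := fun n ω => ∑ j ∈ Finset.range n, G j ω with hSdef
  have hSmeas : ∀ n, Measurable (S n) := fun n => Finset.measurable_sum _ fun j _ => hG j
  have hSmono : Monotone S := fun n₁ n₂ h ω =>
    Finset.sum_le_sum_of_subset (Finset.range_subset_range.mpr h)
  -- pointwise: (∑')^r = ⨆ (S n)^r
  have hpt : ∀ ω, (∑' j, G j ω) ^ r = ⨆ n, (S n ω) ^ r := by
    intro ω
    have h1 : Tendsto (fun n => S n ω) atTop (𝓝 (⨆ n, S n ω)) :=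
      tendsto_atTop_iSup (fun n₁ n₂ h => hSmono h ω)
    have h2 : (∑' j, G j ω) = ⨆ n, S n ω := ENNReal.tsum_eq_iSup_nat
    rw [h2]
    have h3 : Tendsto (fun n => (S n ω) ^ r) atTop (𝓝 ((⨆ n, S n ω) ^ r)) :=
      (ENNReal.continuous_rpow_const.tendsto _).comp h1
    have h4 : Tendsto (fun n => (S n ω) ^ r) atTop (𝓝 (⨆ n, (S n ω) ^ r)) :=
      tendsto_atTop_iSup (fun n₁ n₂ h => ENNReal.rpow_le_rpow (hSmono h ω) hr0.le)
    exact tendsto_nhds_unique h3 h4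
  have hmct : ∫⁻ ω, (∑' j, G j ω) ^ r ∂μ = ⨆ n, ∫⁻ ω, (S n ω) ^ r ∂μ := by
    rw [← lintegral_iSup (fun n => (hSmeas n).pow_const r)
      (fun n₁ n₂ h ω => ENNReal.rpow_le_rpow (hSmono h ω) hr0.le)]
    exact lintegral_congr hpt
  rw [hmct]
  have hbound : ∀ n, ∫⁻ ω, (S n ω) ^ r ∂μ ≤ (∑' j, (∫⁻ ω, (G j ω) ^ r ∂μ) ^ (1/r)) ^ r := by
    intro n
    have h1 := lintegral_Lp_sum_le (μ := μ) hr G hG n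
    have h2 : ∑ j ∈ Finset.range n, (∫⁻ ω, (G j ω) ^ r ∂μ) ^ (1/r)
        ≤ ∑' j, (∫⁻ ω, (G j ω) ^ r ∂μ) ^ (1/r) := ENNReal.sum_le_tsum _
    have h3 := ENNReal.rpow_le_rpow (le_trans h1 h2) hr0.le
    rw [← ENNReal.rpow_mul, one_div_mul_cancel hr0.ne', ENNReal.rpow_one] at h3
    exact h3
  have h5 : (⨆ n, ∫⁻ ω, (S n ω) ^ r ∂μ)
      ≤ (∑' j, (∫⁻ ω, (G j ω) ^ r ∂μ) ^ (1/r)) ^ r := iSup_le hbound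
  have h6 := ENNReal.rpow_le_rpow h5 (by positivity : (0:ℝ) ≤ 1/r)
  rwa [← ENNReal.rpow_mul, mul_one_div, div_self hr0.ne', ENNReal.rpow_one] at h6


lemma eLpNorm_le_of_bound [IsProbabilityMeasure μ] {r : ℝ} (hr : 1 ≤ r)
    (u : Ω → ℝ) (c : ℝ) (hc : 0 ≤ c) (a : ℕ → ℝ) (ha : ∀ j, 0 ≤ a j)
    (V : ℕ → Ω → ℝ) (hV : ∀ j, Measurable (V j))
    (hbound : ∀ ω, |u ω| ≤ c + ∑' j, a j * |V j ω|) :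
    eLpNorm u (ENNReal.ofReal r) μ
      ≤ ENNReal.ofReal c + ∑' j, ENNReal.ofReal (a j) * eLpNorm (V j) (ENNReal.ofReal r) μ := by
  have hr0 : (0:ℝ) < r := lt_of_lt_of_le one_pos hr
  have hp0 : ENNReal.ofReal r ≠ 0 := by
    simp [ENNReal.ofReal_eq_zero, not_le, hr0]
  have hpt : ENNReal.ofReal r ≠ ∞ := ENNReal.ofReal_ne_top
  have htr : (ENNReal.ofReal r).toReal = r := ENNReal.toReal_ofReal hr0.le
  rw [eLpNorm_eq_lintegral_rpow_enorm_toReal hp0 hpt, htr]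
  -- the dominating ENNReal function
  set H : Ω → ℝ≥0∞ := fun ω => ∑' j, ENNReal.ofReal (a j) * (‖V j ω‖₊ : ℝ≥0∞) with hH
  have hHmeas : Measurable H := by
    apply Measurable.ennreal_tsum
    intro j
    exact (measurable_const.mul ((hV j).nnnorm.coe_nnreal_ennreal))
  have hptw : ∀ ω, (‖u ω‖₊ : ℝ≥0∞) ≤ ENNReal.ofReal c + H ω := by
    intro ω
    have h1 : (‖u ω‖₊ : ℝ≥0∞) = ENNReal.ofReal |u ω| := by
      rw [← enorm_eq_nnnorm, ← ofReal_norm, Real.norm_eq_abs]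
    rw [h1]
    refine le_trans (ENNReal.ofReal_le_ofReal (hbound ω)) ?_
    rw [ENNReal.ofReal_add hc (by
      by_cases hs : Summable fun j => a j * |V j ω|
      · exact tsum_nonneg fun j => mul_nonneg (ha j) (abs_nonneg _)
      · rw [tsum_eq_zero_of_not_summable hs])]
    refine add_le_add_right ?_ _
    -- ofReal of real tsum ≤ ENNReal tsum
    by_cases hs : Summable fun j => a j * |V j ω|
    · rw [ENNReal.ofReal_tsum_of_nonneg (fun j => mul_nonneg (ha j) (abs_nonneg _)) hs]
      refine ENNReal.tsum_le_tsum fun j => ?_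
      rw [ENNReal.ofReal_mul (ha j), ← enorm_eq_nnnorm, ← ofReal_norm, Real.norm_eq_abs]
    · rw [tsum_eq_zero_of_not_summable hs]
      simp
  calc (∫⁻ ω, (‖u ω‖₊ : ℝ≥0∞) ^ r ∂μ) ^ (1/r)
      ≤ (∫⁻ ω, (ENNReal.ofReal c + H ω) ^ r ∂μ) ^ (1/r) := by
        apply ENNReal.rpow_le_rpow _ (by positivity : (0:ℝ) ≤ 1/r)
        exact lintegral_mono fun ω => ENNReal.rpow_le_rpow (hptw ω) hr0.le
    _ ≤ (∫⁻ ω, (ENNReal.ofReal c) ^ r ∂μ) ^ (1/r) + (∫⁻ ω, H ω ^ r ∂μ) ^ (1/r) := by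
        exact ENNReal.lintegral_Lp_add_le measurable_const.aemeasurable hHmeas.aemeasurable hr
    _ = ENNReal.ofReal c + (∫⁻ ω, H ω ^ r ∂μ) ^ (1/r) := by
        congr 1
        rw [lintegral_const, measure_univ, mul_one, ← ENNReal.rpow_mul,
          mul_one_div, div_self hr0.ne', ENNReal.rpow_one]
    _ ≤ ENNReal.ofReal c + ∑' j, ENNReal.ofReal (a j) * eLpNorm (V j) (ENNReal.ofReal r) μ := by
        refine add_le_add_right ?_ _
        refine le_trans (lintegral_Lp_tsum_le hr _ (fun j =>
          measurable_const.mul ((hV j).nnnorm.coe_nnreal_ennreal))) ?_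
        refine le_of_eq (tsum_congr fun j => ?_)
        rw [eLpNorm_eq_lintegral_rpow_enorm_toReal hp0 hpt, htr]
        have : ∀ ω, (ENNReal.ofReal (a j) * (‖V j ω‖₊ : ℝ≥0∞)) ^ r
            = (ENNReal.ofReal (a j)) ^ r * (‖V j ω‖₊ : ℝ≥0∞) ^ r := fun ω =>
          ENNReal.mul_rpow_of_nonneg _ _ hr0.le
        simp_rw [this]
        rw [lintegral_const_mul _ ((hV j).nnnorm.coe_nnreal_ennreal.pow_const r),
          ENNReal.mul_rpow_of_nonneg _ _ (by positivity : (0:ℝ) ≤ 1/r),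
          ← ENNReal.rpow_mul, mul_one_div, div_self hr0.ne', ENNReal.rpow_one]
        rfl


end AffineCausalAux

open AffineCausalAux

/-- Quantitative `r`-th moment bound for the stationary causal solution of the affine
causal equation `X_t = M(X_{t−1},…)ζ_t + f(X_{t−1},…)` under the contraction condition
`Σ a_j + κ Σ m_j < 1`, where `κ = (E|ζ₀|^r)^{1/r}`. -/
theorem affine_causal_moment_bound {Ω : Type*} [MeasurableSpace Ω]
    (μ : Measure Ω) [IsProbabilityMeasure μ] (r : ℝ) (hr : 1 ≤ r)
    (ζ : ℤ → Ω → ℝ) (hζmeas : ∀ t, Measurable (ζ t))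
    (hζindep : iIndepFun ζ μ)
    (hζid : ∀ t, Measure.map (ζ t) μ = Measure.map (ζ 0) μ)
    (hζmom : MemLp (ζ 0) (ENNReal.ofReal r) μ)
    (f M : (ℕ → ℝ) → ℝ) (a m : ℕ → ℝ)
    (ha_nonneg : ∀ j, 0 ≤ a j) (hm_nonneg : ∀ j, 0 ≤ m j)
    (ha_sum : Summable a) (hm_sum : Summable m)
    (hf_lip : ∀ x y : ℕ → ℝ, |f x - f y| ≤ ∑' j, a j * |x j - y j|)
    (hM_lip : ∀ x y : ℕ → ℝ, |M x - M y| ≤ ∑' j, m j * |x j - y j|)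
    (κ : ℝ) (hκ : κ = (∫ ω, |ζ 0 ω| ^ r ∂μ) ^ (1 / r))
    (hcontr : (∑' j, a j) + κ * (∑' j, m j) < 1)
    (X : ℤ → Ω → ℝ) (hXmeas : ∀ t, Measurable (X t))
    (hXmom : MemLp (X 0) (ENNReal.ofReal r) μ)
    (hXstat : ∀ t, Measure.map (X t) μ = Measure.map (X 0) μ)
    (hXcausal : ∀ t : ℤ, IndepFun (ζ t) (fun ω => fun j : ℕ => X (t - (j + 1)) ω) μ)
    (hXsol : ∀ t : ℤ, ∀ᵐ ω ∂μ,
      X t ω = M (fun j => X (t - (j + 1)) ω) * ζ t ω + f (fun j => X (t - (j + 1)) ω)) :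
    (∫ ω, |X 0 ω| ^ r ∂μ)
      ≤ ((|f (fun _ => 0)| + κ * |M (fun _ => 0)|)
          / (1 - (∑' j, a j) - κ * (∑' j, m j))) ^ r := by
  have hr0 : (0:ℝ) < r := lt_of_lt_of_le one_pos hr
  set p : ℝ≥0∞ := ENNReal.ofReal r with hp
  have hp0 : p ≠ 0 := by simp [hp, ENNReal.ofReal_eq_zero, not_le, hr0]
  have hpt : p ≠ ∞ := ENNReal.ofReal_ne_top
  have htr : p.toReal = r := ENNReal.toReal_ofReal hr0.le
  set Y : Ω → ℕ → ℝ := fun ω (j : ℕ) => X (0 - (j + 1)) ω with hY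
  have hYmeas : Measurable Y := measurable_pi_lambda _ fun j => hXmeas _
  have hfmeas : Measurable f := measurable_of_lip f a ha_nonneg hf_lip
  have hMmeas : Measurable M := measurable_of_lip M m hm_nonneg hM_lip
  set N : ℝ≥0∞ := eLpNorm (X 0) p μ with hN
  have hNlt : N < ∞ := hXmom.2
  set K : ℝ≥0∞ := eLpNorm (ζ 0) p μ with hK
  have hKlt : K < ∞ := hζmom.2
  -- stationarity of the Lp norm
  have hstat : ∀ t : ℤ, eLpNorm (X t) p μ = N := by
    intro t
    have h1 : eLpNorm (id : ℝ → ℝ) p (Measure.map (X t) μ) = eLpNorm (X t) p μ :=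
      eLpNorm_map_measure measurable_id.aestronglyMeasurable (hXmeas t).aemeasurable
    have h2 : eLpNorm (id : ℝ → ℝ) p (Measure.map (X 0) μ) = eLpNorm (X 0) p μ :=
      eLpNorm_map_measure measurable_id.aestronglyMeasurable (hXmeas 0).aemeasurable
    rw [hN, ← h1, ← h2, hXstat t]
  -- identifying κ with the Lp-norm of ζ 0
  have habs_meas : ∀ (g : Ω → ℝ), Measurable g → Measurable fun ω => |g ω| ^ r :=
    fun g hg => (Real.continuous_rpow_const hr0.le).measurable.comp hg.abs
  have hint_eq : ∀ (g : Ω → ℝ), Measurable g →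
      ∫ ω, |g ω| ^ r ∂μ = (∫⁻ ω, (‖g ω‖₊ : ℝ≥0∞) ^ r ∂μ).toReal := by
    intro g hg
    rw [integral_eq_lintegral_of_nonneg_ae
      (Eventually.of_forall fun ω => Real.rpow_nonneg (abs_nonneg _) r)
      (habs_meas g hg).aestronglyMeasurable]
    congr 1
    apply lintegral_congr
    intro ω
    rw [← enorm_eq_nnnorm, ← ofReal_norm, Real.norm_eq_abs,
      ENNReal.ofReal_rpow_of_nonneg (abs_nonneg _) hr0.le]
  have hform : ∀ (g : Ω → ℝ), eLpNorm g p μ = (∫⁻ ω, (‖g ω‖₊ : ℝ≥0∞) ^ r ∂μ) ^ (1/r) := by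
    intro g
    rw [eLpNorm_eq_lintegral_rpow_enorm_toReal hp0 hpt, htr]
    rfl
  have hLKrel : ∀ (g : Ω → ℝ), eLpNorm g p μ < ∞ →
      (∫⁻ ω, (‖g ω‖₊ : ℝ≥0∞) ^ r ∂μ) = (eLpNorm g p μ) ^ r ∧
      (∫⁻ ω, (‖g ω‖₊ : ℝ≥0∞) ^ r ∂μ) ≠ ∞ := by
    intro g hlt
    have h1 : (eLpNorm g p μ) ^ r = (∫⁻ ω, (‖g ω‖₊ : ℝ≥0∞) ^ r ∂μ) := by
      rw [hform g, ← ENNReal.rpow_mul, one_div_mul_cancel hr0.ne', ENNReal.rpow_one]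
    refine ⟨h1.symm, ?_⟩
    rw [← h1]
    exact (ENNReal.rpow_lt_top_of_nonneg hr0.le hlt.ne).ne
  have htoReal_r : ∀ (g : Ω → ℝ), Measurable g → eLpNorm g p μ < ∞ →
      ∫ ω, |g ω| ^ r ∂μ = (eLpNorm g p μ).toReal ^ r := by
    intro g hg hlt
    obtain ⟨h1, _⟩ := hLKrel g hlt
    rw [hint_eq g hg, h1, ← ENNReal.toReal_rpow]
  have hκK : κ = K.toReal := by
    rw [hκ, htoReal_r (ζ 0) (hζmeas 0) hKlt, ← Real.rpow_mul ENNReal.toReal_nonneg,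
      mul_one_div, div_self hr0.ne', Real.rpow_one]
  have hKofReal : K = ENNReal.ofReal κ := by
    rw [hκK, ENNReal.ofReal_toReal hKlt.ne]
  have hκ0 : 0 ≤ κ := hκK ▸ ENNReal.toReal_nonneg
  set n : ℝ := N.toReal with hn
  have hn0 : 0 ≤ n := ENNReal.toReal_nonneg
  have hNofReal : N = ENNReal.ofReal n := (ENNReal.ofReal_toReal hNlt.ne).symm
  -- the Lipschitz domination bounds
  have hfb : ∀ ω, |f (Y ω)| ≤ |f (fun _ => 0)| + ∑' j, a j * |X (0 - (j + 1)) ω| := by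
    intro ω
    have h := hf_lip (Y ω) (fun _ => 0)
    simp only [sub_zero] at h
    calc |f (Y ω)| = |f (fun _ => 0) + (f (Y ω) - f (fun _ => 0))| := by ring_nf
      _ ≤ |f (fun _ => 0)| + |f (Y ω) - f (fun _ => 0)| := abs_add_le _ _
      _ ≤ _ := add_le_add_right h _
  have hMb : ∀ ω, |M (Y ω)| ≤ |M (fun _ => 0)| + ∑' j, m j * |X (0 - (j + 1)) ω| := by
    intro ω
    have h := hM_lip (Y ω) (fun _ => 0)
    simp only [sub_zero] at h
    calc |M (Y ω)| = |M (fun _ => 0) + (M (Y ω) - M (fun _ => 0))| := by ring_nf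
      _ ≤ |M (fun _ => 0)| + |M (Y ω) - M (fun _ => 0)| := abs_add_le _ _
      _ ≤ _ := add_le_add_right h _
  have hsum_eq : ∀ (b : ℕ → ℝ), (∀ j, 0 ≤ b j) → Summable b →
      (∑' j, ENNReal.ofReal (b j) * eLpNorm (fun ω => X (0 - (j + 1)) ω) p μ)
        = ENNReal.ofReal (∑' j, b j) * N := by
    intro b hb hbs
    have h1 : ∀ j : ℕ, eLpNorm (fun ω => X (0 - (j + 1)) ω) p μ = N := fun j => hstat _
    simp_rw [h1]
    rw [ENNReal.tsum_mul_right, ENNReal.ofReal_tsum_of_nonneg hb hbs]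
  have hfbound : eLpNorm (fun ω => f (Y ω)) p μ
      ≤ ENNReal.ofReal |f (fun _ => 0)| + ENNReal.ofReal (∑' j, a j) * N := by
    refine le_trans (eLpNorm_le_of_bound hr _ _ (abs_nonneg _) a ha_nonneg
      (fun j ω => X (0 - (j + 1)) ω) (fun j => hXmeas _) hfb) ?_
    rw [hsum_eq a ha_nonneg ha_sum]
  have hMbound : eLpNorm (fun ω => M (Y ω)) p μ
      ≤ ENNReal.ofReal |M (fun _ => 0)| + ENNReal.ofReal (∑' j, m j) * N := by
    refine le_trans (eLpNorm_le_of_bound hr _ _ (abs_nonneg _) m hm_nonneg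
      (fun j ω => X (0 - (j + 1)) ω) (fun j => hXmeas _) hMb) ?_
    rw [hsum_eq m hm_nonneg hm_sum]
  -- independence: the Lp norm of the product factorizes
  have hφmeas : Measurable fun ω => (‖M (Y ω)‖₊ : ℝ≥0∞) ^ r :=
    ((hMmeas.comp hYmeas).nnnorm.coe_nnreal_ennreal).pow_const r
  have hψmeas : Measurable fun ω => (‖ζ 0 ω‖₊ : ℝ≥0∞) ^ r :=
    ((hζmeas 0).nnnorm.coe_nnreal_ennreal).pow_const r
  have hindep : IndepFun (fun ω => (‖M (Y ω)‖₊ : ℝ≥0∞) ^ r)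
      (fun ω => (‖ζ 0 ω‖₊ : ℝ≥0∞) ^ r) μ := by
    have h0 : IndepFun Y (ζ 0) μ := (hXcausal 0).symm
    exact h0.comp ((hMmeas.nnnorm.coe_nnreal_ennreal).pow_const r)
      ((measurable_id.nnnorm.coe_nnreal_ennreal).pow_const r)
  have hprod : eLpNorm (fun ω => M (Y ω) * ζ 0 ω) p μ
      = eLpNorm (fun ω => M (Y ω)) p μ * K := by
    rw [hform, hform, hK, hform]
    have h1 : ∫⁻ ω, (‖M (Y ω) * ζ 0 ω‖₊ : ℝ≥0∞) ^ r ∂μ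
        = (∫⁻ ω, (‖M (Y ω)‖₊ : ℝ≥0∞) ^ r ∂μ) * ∫⁻ ω, (‖ζ 0 ω‖₊ : ℝ≥0∞) ^ r ∂μ := by
      rw [← lintegral_mul_eq_lintegral_mul_lintegral_of_indepFun hφmeas hψmeas hindep]
      apply lintegral_congr
      intro ω
      simp [nnnorm_mul, ENNReal.coe_mul, ENNReal.mul_rpow_of_nonneg _ _ hr0.le]
    rw [h1, ENNReal.mul_rpow_of_nonneg _ _ (by positivity : (0:ℝ) ≤ 1/r)]
  -- triangle inequality from the recursion
  have hXeq : N = eLpNorm (fun ω => M (Y ω) * ζ 0 ω + f (Y ω)) p μ := by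
    rw [hN]
    exact eLpNorm_congr_ae (hXsol 0)
  have htri : N ≤ eLpNorm (fun ω => M (Y ω) * ζ 0 ω) p μ
      + eLpNorm (fun ω => f (Y ω)) p μ := by
    rw [hXeq]
    exact eLpNorm_add_le ((hMmeas.comp hYmeas).mul (hζmeas 0)).aestronglyMeasurable
      (hfmeas.comp hYmeas).aestronglyMeasurable (ENNReal.one_le_ofReal.mpr hr)
  -- combine
  set A : ℝ := ∑' j, a j with hA
  set B : ℝ := ∑' j, m j with hB
  have hA0 : 0 ≤ A := tsum_nonneg ha_nonneg
  have hB0 : 0 ≤ B := tsum_nonneg hm_nonneg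
  have hmain : N ≤ ENNReal.ofReal (((|M (fun _ => 0)| + B * n) * κ) + (|f (fun _ => 0)| + A * n)) := by
    refine le_trans htri ?_
    have h2 : eLpNorm (fun ω => M (Y ω) * ζ 0 ω) p μ
        ≤ ENNReal.ofReal ((|M (fun _ => 0)| + B * n) * κ) := by
      rw [hprod, ENNReal.ofReal_mul (by positivity)]
      refine mul_le_mul' ?_ hKofReal.le
      refine le_trans hMbound (le_of_eq ?_)
      rw [ENNReal.ofReal_add (abs_nonneg _) (by positivity), ENNReal.ofReal_mul hB0, hNofReal]
    have h3 : eLpNorm (fun ω => f (Y ω)) p μ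
        ≤ ENNReal.ofReal (|f (fun _ => 0)| + A * n) := by
      refine le_trans hfbound (le_of_eq ?_)
      rw [ENNReal.ofReal_add (abs_nonneg _) (by positivity), ENNReal.ofReal_mul hA0, hNofReal]
    refine le_trans (add_le_add h2 h3) (le_of_eq ?_)
    rw [← ENNReal.ofReal_add (by positivity) (by positivity)]
  have hreal : n ≤ (|M (fun _ => 0)| + B * n) * κ + (|f (fun _ => 0)| + A * n) := by
    rw [hNofReal] at hmain
    exact (ENNReal.ofReal_le_ofReal_iff (by positivity)).mp hmain
  -- final real algebra
  have hq : A + κ * B < 1 := hcontr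
  have hden : 0 < 1 - A - κ * B := by linarith
  have hle : n ≤ (|f (fun _ => 0)| + κ * |M (fun _ => 0)|) / (1 - A - κ * B) := by
    rw [le_div_iff₀ hden]
    nlinarith [hreal]
  calc (∫ ω, |X 0 ω| ^ r ∂μ) = n ^ r := htoReal_r (X 0) (hXmeas 0) hNlt
    _ ≤ _ := Real.rpow_le_rpow hn0 hle hr0.le
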